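/- Let (X, Y) be a continuous biframe for H whose continuous biframe operator S = S_{X,Y} is self-adjoint and invertible with bounded adjointable inverse S⁻¹. Then (X, S⁻¹∘Y) is a dual continuous biframe for H; that is, ⟨f, g⟩ = ∫_Ω ⟨f, X(ω)⟩⟨S⁻¹Y(ω), g⟩ dμ(ω) for all f, g ∈ H. -/

import Mathlib

set_option linter.unusedSectionVars false

section StarAux

variable {𝒜 : Type*} [NormedRing 𝒜] [StarRing 𝒜] [CStarRing 𝒜] [NormedAlgebra ℂ 𝒜]
  [PartialOrder 𝒜] [StarOrderedRing 𝒜]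

lemma my_star_algebraMap_I : star (algebraMap ℂ 𝒜 Complex.I) = - algebraMap ℂ 𝒜 Complex.I := by
  set j : 𝒜 := algebraMap ℂ 𝒜 Complex.I with hjdef
  have hj2 : j * j = -1 := by
    rw [hjdef, ← map_mul, Complex.I_mul_I, map_neg, map_one]
  have hjc : ∀ a : 𝒜, j * a = a * j := fun a => Algebra.commutes Complex.I a
  set k : 𝒜 := star j with hkdef
  have hkc : ∀ a : 𝒜, k * a = a * k := fun a => by
    calc k * a = star (star a * j) := by rw [star_mul, star_star]
    _ = star (j * star a) := by rw [hjc]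
    _ = a * k := by rw [star_mul, star_star]
  have hvsa : star (j * k) = j * k := by
    rw [star_mul, hkdef, star_star]
  have hk2 : k * k = -1 := by
    rw [hkdef, ← star_mul, hj2, star_neg, star_one]
  have hv2 : (j * k) * (j * k) = 1 := by
    calc (j * k) * (j * k) = j * ((k * j) * k) := by simp only [mul_assoc]
      _ = j * ((j * k) * k) := by rw [hkc j]
      _ = (j * j) * (k * k) := by simp only [mul_assoc]
      _ = 1 := by rw [hj2, hk2, neg_mul_neg, one_mul]
  set q : 𝒜 := 1 - j * k with hqdef
  have hq_sa : star q = q := by rw [hqdef, star_sub, star_one, hvsa]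
  have hq_sq : q * q = q + q := by
    rw [hqdef, sub_mul, mul_sub, mul_sub, one_mul, mul_one, hv2]
    noncomm_ring
  have h1 : (0:𝒜) ≤ q + q := by
    have h := star_mul_self_nonneg q
    rwa [hq_sa, hq_sq] at h
  have hqc : ∀ a : 𝒜, q * a = a * q := fun a => by
    rw [hqdef, sub_mul, mul_sub, one_mul, mul_one]
    congr 1
    rw [mul_assoc, hkc a, ← mul_assoc, hjc a, mul_assoc]
  have hqv : q * (j * k) = -q := by
    rw [hqdef, sub_mul, one_mul, hv2]
    noncomm_ring
  have h2 : (0:𝒜) ≤ -(q + q) := by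
    have h := star_mul_self_nonneg (q * j)
    have hexp : star (q * j) * (q * j) = -(q + q) := by
      calc star (q * j) * (q * j) = (k * q) * (q * j) := by rw [star_mul, hq_sa, ← hkdef]
        _ = k * ((q * q) * j) := by simp only [mul_assoc]
        _ = ((q * q) * j) * k := hkc _
        _ = (q * q) * (j * k) := by rw [mul_assoc]
        _ = q * (j * k) + q * (j * k) := by rw [hq_sq, add_mul]
        _ = -(q + q) := by rw [hqv, neg_add]
    rwa [hexp] at h
  have hqq : q + q = 0 := le_antisymm (neg_nonneg.mp h2) h1
  have hq0 : q = 0 := by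
    have h2q : (2:ℝ) • q = 0 := by rw [two_smul]; exact hqq
    rcases smul_eq_zero.mp h2q with h | h
    · norm_num at h
    · exact h
  have hjk : j * k = 1 := by
    have := hq0
    rw [hqdef, sub_eq_zero] at this
    exact this.symm
  have h := congrArg (fun a => j * a) hjk
  simp only [mul_one] at h
  rw [← mul_assoc, hj2, neg_one_mul, neg_eq_iff_eq_neg] at h
  exact h

lemma my_star_algebraMap_real (r : ℝ) :
    star (algebraMap ℂ 𝒜 (r : ℂ)) = algebraMap ℂ 𝒜 (r : ℂ) := by
  set F : ℝ →+ 𝒜 := AddMonoidHom.mk' (fun r : ℝ => star (algebraMap ℂ 𝒜 (r : ℂ)))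
    (fun r s => by beta_reduce; rw [Complex.ofReal_add, map_add, star_add]) with hF
  have hcont : Continuous F := by
    show Continuous fun r : ℝ => star (algebraMap ℂ 𝒜 (r : ℂ))
    exact continuous_star.comp ((continuous_algebraMap ℂ 𝒜).comp Complex.continuous_ofReal)
  have h1 : F r = r • F 1 := by
    have := map_real_smul F hcont r 1
    rwa [smul_eq_mul, mul_one] at this
  have hF1 : F 1 = 1 := by
    simp only [hF, AddMonoidHom.mk'_apply, Complex.ofReal_one, map_one, star_one]
  have : F r = r • (1:𝒜) := by rw [h1, hF1]
  simp only [hF, AddMonoidHom.mk'_apply] at this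
  rw [this, ← Complex.coe_smul, ← Algebra.algebraMap_eq_smul_one]

lemma my_star_algebraMap (z : ℂ) :
    star (algebraMap ℂ 𝒜 z) = algebraMap ℂ 𝒜 (star z) := by
  have hz : ∀ w : ℂ, algebraMap ℂ 𝒜 w
      = algebraMap ℂ 𝒜 (w.re : ℂ) + algebraMap ℂ 𝒜 (w.im : ℂ) * algebraMap ℂ 𝒜 Complex.I := by
    intro w
    rw [← map_mul, ← map_add, Complex.re_add_im]
  rw [hz z, hz (star z)]
  rw [star_add, star_mul, my_star_algebraMap_I, my_star_algebraMap_real,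
    my_star_algebraMap_real]
  have : ((star z).re : ℂ) = (z.re : ℂ) := by simp [Complex.star_def]
  rw [this]
  have : ((star z).im : ℂ) = -(z.im : ℂ) := by simp [Complex.star_def]
  rw [this, map_neg]
  congr 1
  rw [neg_mul, neg_mul, Algebra.commutes Complex.I]

lemma my_starModule : StarModule ℂ 𝒜 := by
  constructor
  intro z a
  rw [Algebra.smul_def, star_mul, my_star_algebraMap, ← Algebra.commutes, ← Algebra.smul_def]

end StarAux


lemma my_cs {𝒜 : Type*} [CStarAlgebra 𝒜] [PartialOrder 𝒜] [StarOrderedRing 𝒜]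
    {H : Type*} [AddCommGroup H] [Module 𝒜 H]
    (inn : H → H → 𝒜)
    (inn_add_left : ∀ x y z : H, inn (x + y) z = inn x z + inn y z)
    (inn_smul_left : ∀ (a : 𝒜) (x z : H), inn (a • x) z = a * inn x z)
    (inn_conj_symm : ∀ x y : H, inn x y = star (inn y x))
    (inn_nonneg : ∀ x : H, 0 ≤ inn x x)
    (x y : H) (hy : inn y y ≠ 0) :
    ‖inn x y‖ * ‖inn x y‖ ≤ ‖inn x x‖ * ‖inn y y‖ := by
  set b := inn x y with hb
  set K := ‖inn y y‖ with hK
  have hKpos : 0 < K := norm_pos_iff.mpr hy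
  set t : ℝ := K⁻¹ with ht_def
  have ht : 0 ≤ t := inv_nonneg.mpr hKpos.le
  -- scalar multiplication by nonnegative reals is monotone
  have hsmul : ∀ (r : ℝ), 0 ≤ r → ∀ c d : 𝒜, c ≤ d → r • c ≤ r • d := by
    intro r hr c d hcd
    have hcon : ∀ c : 𝒜, (Real.sqrt r • (1:𝒜)) * c * (Real.sqrt r • (1:𝒜)) = r • c := by
      intro c
      rw [smul_mul_assoc, one_mul, mul_smul_comm, mul_one, smul_smul, Real.mul_self_sqrt hr]
    have h := star_left_conjugate_le_conjugate hcd (Real.sqrt r • (1:𝒜))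
    have hstar : star (Real.sqrt r • (1:𝒜)) = Real.sqrt r • (1:𝒜) := by
      rw [star_smul, star_one, star_trivial]
    rw [hstar, hcon, hcon] at h
    exact h
  have inn_sub_left : ∀ u v z : H, inn (u - v) z = inn u z - inn v z := by
    intro u v z
    have h := inn_add_left (u - v) v z
    rw [sub_add_cancel] at h
    exact eq_sub_of_add_eq h.symm
  have hstar_b : star (t • b) = t • star b := by rw [star_smul, star_trivial]
  set a : 𝒜 := t • b with ha_def
  have step1 : ∀ z : H, inn (x - a • y) z = inn x z - a * inn y z := by
    intro z
    rw [inn_sub_left, inn_smul_left]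
  have step2 : ∀ w : H, inn w (x - a • y) = inn w x - inn w y * star a := by
    intro w
    rw [inn_conj_symm w (x - a • y), step1, star_sub, star_mul, ← inn_conj_symm,
      ← inn_conj_symm]
  have hyx : inn y x = star b := by rw [inn_conj_symm y x]
  have key : inn (x - a • y) (x - a • y)
      = inn x x - t • (b * star b) - t • (b * star b) + (t*t) • (b * inn y y * star b) := by
    rw [step1, step2, step2, mul_sub, hyx, ha_def, hstar_b]
    simp only [smul_mul_assoc, mul_smul_comm, smul_smul, mul_assoc, ← hb]
    abel
  have h0 : (0:𝒜) ≤ inn (x - a • y) (x - a • y) := inn_nonneg _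
  rw [key] at h0
  have h1 : t • (b * star b) + t • (b * star b)
      ≤ inn x x + (t*t) • (b * inn y y * star b) := by
    rw [← sub_nonneg]
    convert h0 using 1
    abel
  have hsa : IsSelfAdjoint (inn y y) := (inn_conj_symm y y).symm
  have h2 : b * inn y y * star b ≤ K • (b * star b) :=
    CStarAlgebra.star_right_conjugate_le_norm_smul hsa
  have h3 : (t*t) • (b * inn y y * star b) ≤ (t*t) • (K • (b * star b)) :=
    hsmul _ (mul_nonneg ht ht) _ _ h2
  have h4 : (t*t) • (K • (b * star b)) = t • (b * star b) := by
    rw [smul_smul]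
    congr 1
    rw [ht_def]
    field_simp
  have h5 : t • (b * star b) + t • (b * star b) ≤ inn x x + t • (b * star b) := by
    refine le_trans h1 ?_
    rw [← h4]
    exact add_le_add_right h3 _
  have h6 : t • (b * star b) ≤ inn x x := (add_le_add_iff_right _).mp h5
  have h7 : (0:𝒜) ≤ t • (b * star b) := by
    have h := hsmul t ht 0 (b * star b) (mul_star_self_nonneg b)
    rwa [smul_zero] at h
  have h8 : ‖t • (b * star b)‖ ≤ ‖inn x x‖ :=
    CStarAlgebra.norm_le_norm_of_nonneg_of_le h7 h6
  rw [norm_smul, Real.norm_of_nonneg ht, CStarRing.norm_self_mul_star] at h8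
  rw [ht_def] at h8
  have := (inv_mul_le_iff₀ hKpos).mp h8
  exact this.trans_eq (mul_comm _ _)




open MeasureTheory

/-- If the biframe operator `S = S_{X,Y}` of a continuous biframe `(X, Y)`
is self-adjoint and invertible with bounded adjointable inverse, then `(X, S⁻¹∘Y)` is a dual
continuous biframe: `⟨f, g⟩ = ∫ ⟨f, X(ω)⟩⟨S⁻¹Y(ω), g⟩ dμ`. -/
theorem dual_biframe_X_SinvY
    {𝒜 H Ω : Type*}
    -- `𝒜` is a unital C*-algebra
    [NormedRing 𝒜] [StarRing 𝒜] [CStarRing 𝒜] [NormedAlgebra ℂ 𝒜] [CompleteSpace 𝒜]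
    [PartialOrder 𝒜] [StarOrderedRing 𝒜]
    -- `H` is a Hilbert C*-module over `𝒜`
    [NormedAddCommGroup H] [NormedSpace ℝ H] [CompleteSpace H] [Module 𝒜 H]
    (inn : H → H → 𝒜)
    (inn_add_left : ∀ x y z : H, inn (x + y) z = inn x z + inn y z)
    (inn_smul_left : ∀ (a : 𝒜) (x z : H), inn (a • x) z = a * inn x z)
    (inn_conj_symm : ∀ x y : H, inn x y = star (inn y x))
    (inn_nonneg : ∀ x : H, 0 ≤ inn x x)
    (inn_definite : ∀ x : H, inn x x = 0 → x = 0)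
    (hnorm : ∀ x : H, ‖x‖ = Real.sqrt ‖inn x x‖)
    -- `(Ω, μ)` is a measure space
    [MeasurableSpace Ω] (μ : Measure Ω)
    -- `X, Y : Ω → H` are weakly measurable
    (X Y : Ω → H)
    (hXw : ∀ f : H, AEStronglyMeasurable (fun ω => inn f (X ω)) μ)
    (hYw : ∀ f : H, AEStronglyMeasurable (fun ω => inn f (Y ω)) μ)
    (A B : ℝ) (hA : 0 < A) (hAB : A ≤ B)
    -- `(X, Y)` is a continuous biframe with bounds `A, B`
    (hframe : ∀ f : H,
      A • inn f f ≤ ∫ ω, inn f (X ω) * inn (Y ω) f ∂μ ∧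
      ∫ ω, inn f (X ω) * inn (Y ω) f ∂μ ≤ B • inn f f)
    -- the continuous biframe operator `S = S_{X,Y}` (Bochner integral)
    (hXYint : ∀ f : H, Integrable (fun ω => inn f (X ω) • Y ω) μ)
    (S : H → H)
    (hS : ∀ f : H, S f = ∫ ω, inn f (X ω) • Y ω ∂μ)
    -- `S` is self-adjoint
    (hSsa : ∀ f g : H, inn (S f) g = inn f (S g))
    -- `S` is invertible with bounded adjointable inverse `Sinv`
    (Sinv : H → H) (hSinvc : Continuous Sinv)
    (hSinv₁ : ∀ f : H, Sinv (S f) = f) (hSinv₂ : ∀ f : H, S (Sinv f) = f)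
    (Sinvs : H → H)
    (hSinvadj : ∀ f g : H, inn (Sinv f) g = inn f (Sinvs g))
    (hdint : ∀ f g : H, Integrable (fun ω => inn f (X ω) * inn (Sinv (Y ω)) g) μ) :
    ∀ f g : H, inn f g = ∫ ω, inn f (X ω) * inn (Sinv (Y ω)) g ∂μ := by

  -- Build a `CStarAlgebra` structure on `𝒜`
  haveI hSM : StarModule ℂ 𝒜 := my_starModule
  letI : CStarAlgebra 𝒜 :=
    { ‹NormedRing 𝒜›, ‹StarRing 𝒜›, ‹CStarRing 𝒜›, ‹NormedAlgebra ℂ 𝒜›,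
      ‹CompleteSpace 𝒜›, hSM with }
  have inn_zero : ∀ z : H, inn (0:H) z = 0 := by
    intro z
    have h := inn_add_left 0 0 z
    rw [add_zero] at h
    exact (left_eq_add.mp h)
  -- Cauchy-Schwarz
  have hCS : ∀ x y : H, ‖inn x y‖ ≤ ‖x‖ * ‖y‖ := by
    intro x y
    by_cases hy : inn y y = 0
    · have hy0 : y = 0 := inn_definite y hy
      have : inn x y = 0 := by
        rw [hy0, inn_conj_symm, inn_zero, star_zero]
      rw [this, norm_zero]
      exact mul_nonneg (norm_nonneg _) (norm_nonneg _)
    · have h := my_cs inn inn_add_left inn_smul_left inn_conj_symm inn_nonneg x y hy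
      rw [hnorm x, hnorm y, ← Real.sqrt_mul (norm_nonneg _),
        ← Real.sqrt_mul_self (norm_nonneg (inn x y))]
      exact Real.sqrt_le_sqrt h
  -- the map `x ↦ inn x h` as a continuous linear map, and swapping with the integral
  have hint : ∀ (f h : H), inn (S f) h = ∫ ω, inn f (X ω) * inn (Y ω) h ∂μ := by
    intro f h
    set F : H →+ 𝒜 := AddMonoidHom.mk' (fun x => inn x h) (fun u v => inn_add_left u v h)
      with hFdef
    have Fcont : Continuous F := by
      refine AddMonoidHomClass.continuous_of_bound F ‖h‖ (fun x => ?_)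
      rw [mul_comm]
      exact hCS x h
    set φ : H →L[ℝ] 𝒜 := F.toRealLinearMap Fcont with hφdef
    have hφ : ∀ x : H, φ x = inn x h := fun x => rfl
    calc inn (S f) h = φ (S f) := (hφ _).symm
      _ = φ (∫ ω, inn f (X ω) • Y ω ∂μ) := by rw [hS]
      _ = ∫ ω, φ (inn f (X ω) • Y ω) ∂μ :=
          (ContinuousLinearMap.integral_comp_comm φ (hXYint f)).symm
      _ = ∫ ω, inn f (X ω) * inn (Y ω) h ∂μ := by
          congr 1
          funext ω
          rw [hφ, inn_smul_left]
  intro f g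
  calc inn f g = inn (Sinv (S f)) g := by rw [hSinv₁]
    _ = inn (S f) (Sinvs g) := hSinvadj _ _
    _ = ∫ ω, inn f (X ω) * inn (Y ω) (Sinvs g) ∂μ := hint f (Sinvs g)
    _ = ∫ ω, inn f (X ω) * inn (Sinv (Y ω)) g ∂μ := by simp_rw [hSinvadj]
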